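/- arXiv:2212.09546 — 2 statements merged into one kernel-verified Lean document; each statement's English description precedes it below -/
import Mathlib

section
/- The function θ : ℝ² → ℝ defined by θ(x,y) = 2 arctan( (cosh(√2·x) − cosh(√2·y)) / (cosh(√2·x) + cosh(√2·y)) ) satisfies the elliptic sine-Gordon equation Δθ = −2 sin(2θ) on all of ℝ². -/
/-- First partial derivative (in the x-direction) of a function on ℝ². -/
noncomputable def pdx (f : ℝ × ℝ → ℝ) (p : ℝ × ℝ) : ℝ := fderiv ℝ f p (1, 0)

/-- Second partial derivative (in the y-direction) of a function on ℝ². -/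
noncomputable def pdy (f : ℝ × ℝ → ℝ) (p : ℝ × ℝ) : ℝ := fderiv ℝ f p (0, 1)

/-- Laplacian of a function on ℝ². -/
noncomputable def lap (f : ℝ × ℝ → ℝ) (p : ℝ × ℝ) : ℝ := pdx (pdx f) p + pdy (pdy f) p

open Real

noncomputable def e1 : ℝ × ℝ →L[ℝ] ℝ := ContinuousLinearMap.fst ℝ ℝ ℝ
noncomputable def e2 : ℝ × ℝ →L[ℝ] ℝ := ContinuousLinearMap.snd ℝ ℝ ℝ

noncomputable def ca (p : ℝ × ℝ) : ℝ := Real.cosh (Real.sqrt 2 * p.1)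
noncomputable def cb (p : ℝ × ℝ) : ℝ := Real.cosh (Real.sqrt 2 * p.2)
noncomputable def sa (p : ℝ × ℝ) : ℝ := Real.sinh (Real.sqrt 2 * p.1)
noncomputable def sb (p : ℝ × ℝ) : ℝ := Real.sinh (Real.sqrt 2 * p.2)

lemma hca (p : ℝ × ℝ) : HasFDerivAt ca ((sa p * Real.sqrt 2) • e1) p := by
  have h := (Real.hasDerivAt_cosh (Real.sqrt 2 * p.1)).comp_hasFDerivAt p
    ((hasFDerivAt_fst : HasFDerivAt Prod.fst (ContinuousLinearMap.fst ℝ ℝ ℝ) p).const_mul (Real.sqrt 2))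
  simp [ca, sa, e1, smul_smul, Function.comp_def] at h ⊢; exact h

lemma hcb (p : ℝ × ℝ) : HasFDerivAt cb ((sb p * Real.sqrt 2) • e2) p := by
  have h := (Real.hasDerivAt_cosh (Real.sqrt 2 * p.2)).comp_hasFDerivAt p
    ((hasFDerivAt_snd : HasFDerivAt Prod.snd (ContinuousLinearMap.snd ℝ ℝ ℝ) p).const_mul (Real.sqrt 2))
  simp [cb, sb, e2, smul_smul, Function.comp_def] at h ⊢; exact h

lemma hsa (p : ℝ × ℝ) : HasFDerivAt sa ((ca p * Real.sqrt 2) • e1) p := by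
  have h := (Real.hasDerivAt_sinh (Real.sqrt 2 * p.1)).comp_hasFDerivAt p
    ((hasFDerivAt_fst : HasFDerivAt Prod.fst (ContinuousLinearMap.fst ℝ ℝ ℝ) p).const_mul (Real.sqrt 2))
  simp [ca, sa, e1, smul_smul, Function.comp_def] at h ⊢; exact h

lemma hsb (p : ℝ × ℝ) : HasFDerivAt sb ((cb p * Real.sqrt 2) • e2) p := by
  have h := (Real.hasDerivAt_sinh (Real.sqrt 2 * p.2)).comp_hasFDerivAt p
    ((hasFDerivAt_snd : HasFDerivAt Prod.snd (ContinuousLinearMap.snd ℝ ℝ ℝ) p).const_mul (Real.sqrt 2))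
  simp [cb, sb, e2, smul_smul, Function.comp_def] at h ⊢; exact h

noncomputable def q (p : ℝ × ℝ) : ℝ := (ca p - cb p) * (ca p + cb p)⁻¹
noncomputable def Θ (p : ℝ × ℝ) : ℝ := 2 * Real.arctan (q p)
noncomputable def G (p : ℝ × ℝ) : ℝ := ca p * ca p + cb p * cb p
noncomputable def F1 (p : ℝ × ℝ) : ℝ := 2 * Real.sqrt 2 * (sa p * cb p) * (G p)⁻¹
noncomputable def F2 (p : ℝ × ℝ) : ℝ := -(2 * Real.sqrt 2) * (sb p * ca p) * (G p)⁻¹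

lemma capos (p : ℝ × ℝ) : 0 < ca p := by unfold ca; positivity
lemma cbpos (p : ℝ × ℝ) : 0 < cb p := by unfold cb; positivity
lemma hden (p : ℝ × ℝ) : ca p + cb p ≠ 0 := by have := capos p; have := cbpos p; positivity
lemma hG (p : ℝ × ℝ) : G p ≠ 0 := by have := capos p; have := cbpos p; unfold G; positivity

lemma hq (p : ℝ × ℝ) : HasFDerivAt q
    ((2 * Real.sqrt 2 * sa p * cb p * ((ca p + cb p) ^ 2)⁻¹) • e1 +
     (-(2 * Real.sqrt 2 * sb p * ca p) * ((ca p + cb p) ^ 2)⁻¹) • e2) p := by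
  have hnum := (hca p).sub (hcb p)
  have hdenD := (hca p).add (hcb p)
  have hinv := (hasDerivAt_inv (hden p)).comp_hasFDerivAt p hdenD
  have h := hnum.mul hinv
  convert (config := {transparency := .default, preTransparency := .default}) h using 1
  refine ContinuousLinearMap.ext fun v => ?_
  simp [e1, e2, smul_smul]
  have hd : ca p + cb p ≠ 0 := hden p
  have hd' : cb p + ca p ≠ 0 := by rw [add_comm]; exact hd
  field_simp
  ring

lemma hq2 (p : ℝ × ℝ) : 1 + q p ^ 2 = 2 * G p * ((ca p + cb p) ^ 2)⁻¹ := by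
  have hd : ca p + cb p ≠ 0 := hden p
  unfold q G
  field_simp [q, G]
  ring

lemma hΘ (p : ℝ × ℝ) : HasFDerivAt Θ ((F1 p) • e1 + (F2 p) • e2) p := by
  have h := ((Real.hasDerivAt_arctan (q p)).comp_hasFDerivAt p (hq p)).const_mul 2
  convert (config := {transparency := .default, preTransparency := .default}) h using 1
  have hd : ca p + cb p ≠ 0 := hden p
  have hg : G p ≠ 0 := hG p
  have e1eq : F1 p = 2 * ((1/(1 + q p ^ 2)) * (2 * Real.sqrt 2 * sa p * cb p * ((ca p + cb p) ^ 2)⁻¹)) := by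
    rw [hq2]; unfold F1; field_simp [F1]
  have e2eq : F2 p = 2 * ((1/(1 + q p ^ 2)) * (-(2 * Real.sqrt 2 * sb p * ca p) * ((ca p + cb p) ^ 2)⁻¹)) := by
    rw [hq2]; unfold F2; field_simp [F2]
  rw [e1eq, e2eq]
  module

lemma hGd (p : ℝ × ℝ) : HasFDerivAt G
    ((2 * (ca p * sa p) * Real.sqrt 2) • e1 + (2 * (cb p * sb p) * Real.sqrt 2) • e2) p := by
  have h := ((hca p).mul (hca p)).add ((hcb p).mul (hcb p))
  convert (config := {transparency := .default, preTransparency := .default}) h using 1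
  module

lemma hF1 (p : ℝ × ℝ) : HasFDerivAt F1
    (((2 * (Real.sqrt 2 * Real.sqrt 2) * ca p * cb p * G p
        - 4 * (Real.sqrt 2 * Real.sqrt 2) * sa p ^ 2 * ca p * cb p) * (G p ^ 2)⁻¹) • e1 +
     ((2 * (Real.sqrt 2 * Real.sqrt 2) * sa p * sb p * G p
        - 4 * (Real.sqrt 2 * Real.sqrt 2) * sa p * sb p * cb p ^ 2) * (G p ^ 2)⁻¹) • e2) p := by
  have hinvG := (hasDerivAt_inv (hG p)).comp_hasFDerivAt p (hGd p)
  have h := (((hsa p).mul (hcb p)).const_mul (2 * Real.sqrt 2)).mul hinvG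
  convert (config := {transparency := .default, preTransparency := .default}) h using 1
  refine ContinuousLinearMap.ext fun v => ?_
  have hg : G p ≠ 0 := hG p
  simp [e1, e2, smul_smul]
  have h2 : Real.sqrt 2 ^ 2 = 2 := Real.sq_sqrt (by norm_num)
  field_simp
  ring_nf
  simp only [h2]
  ring

lemma hF2 (p : ℝ × ℝ) : HasFDerivAt F2
    (((-2 * (Real.sqrt 2 * Real.sqrt 2) * sa p * sb p * G p
        + 4 * (Real.sqrt 2 * Real.sqrt 2) * sa p * sb p * ca p ^ 2) * (G p ^ 2)⁻¹) • e1 +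
     ((-2 * (Real.sqrt 2 * Real.sqrt 2) * ca p * cb p * G p
        + 4 * (Real.sqrt 2 * Real.sqrt 2) * sb p ^ 2 * ca p * cb p) * (G p ^ 2)⁻¹) • e2) p := by
  have hinvG := (hasDerivAt_inv (hG p)).comp_hasFDerivAt p (hGd p)
  have h := (((hsb p).mul (hca p)).const_mul (-(2 * Real.sqrt 2))).mul hinvG
  convert (config := {transparency := .default, preTransparency := .default}) h using 1
  refine ContinuousLinearMap.ext fun v => ?_
  have hg : G p ≠ 0 := hG p
  simp [e1, e2, smul_smul]
  have h2 : Real.sqrt 2 ^ 2 = 2 := Real.sq_sqrt (by norm_num)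
  field_simp
  ring_nf
  simp only [h2]
  ring

lemma sin4arctan (t : ℝ) :
    Real.sin (2 * (2 * Real.arctan t)) = 4 * t * (1 - t ^ 2) / (1 + t ^ 2) ^ 2 := by
  have h0 : (0:ℝ) < 1 + t ^ 2 := by positivity
  have hr2 : Real.sqrt (1 + t ^ 2) ^ 2 = 1 + t ^ 2 := Real.sq_sqrt h0.le
  have hr0 : Real.sqrt (1 + t ^ 2) ≠ 0 := by positivity
  rw [Real.sin_two_mul, Real.sin_two_mul, Real.cos_two_mul, Real.sin_arctan, Real.cos_arctan]
  field_simp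
  ring_nf
  rw [show Real.sqrt (1 + t ^ 2) ^ 4 = (Real.sqrt (1 + t ^ 2) ^ 2) ^ 2 by ring, hr2]
  ring

lemma pdxΘ : pdx Θ = F1 := by
  funext p
  rw [pdx, (hΘ p).fderiv]
  simp [e1, e2]

lemma pdyΘ : pdy Θ = F2 := by
  funext p
  rw [pdy, (hΘ p).fderiv]
  simp [e1, e2]

lemma lapΘ (p : ℝ × ℝ) : lap Θ p = -2 * Real.sin (2 * Θ p) := by
  have hx : pdx (pdx Θ) p = (2 * (Real.sqrt 2 * Real.sqrt 2) * ca p * cb p * G p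
        - 4 * (Real.sqrt 2 * Real.sqrt 2) * sa p ^ 2 * ca p * cb p) * (G p ^ 2)⁻¹ := by
    rw [pdxΘ, pdx, (hF1 p).fderiv]
    simp [e1, e2]
  have hy : pdy (pdy Θ) p = (-2 * (Real.sqrt 2 * Real.sqrt 2) * ca p * cb p * G p
        + 4 * (Real.sqrt 2 * Real.sqrt 2) * sb p ^ 2 * ca p * cb p) * (G p ^ 2)⁻¹ := by
    rw [pdyΘ, pdy, (hF2 p).fderiv]
    simp [e1, e2]
  rw [lap, hx, hy, Θ, sin4arctan]
  have h2 : Real.sqrt 2 * Real.sqrt 2 = 2 := Real.mul_self_sqrt (by norm_num)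
  have hA2 : sa p ^ 2 = ca p ^ 2 - 1 := by
    rw [sa, ca, Real.sinh_sq]
  have hB2 : sb p ^ 2 = cb p ^ 2 - 1 := by
    rw [sb, cb, Real.sinh_sq]
  rw [h2, hA2, hB2]
  have hd : ca p + cb p ≠ 0 := hden p
  have hg : G p ≠ 0 := hG p
  rw [q, G] at *
  have hg2 : ca p ^ 2 + cb p ^ 2 ≠ 0 := by rw [pow_two, pow_two]; exact hg
  field_simp
  ring

theorem stmt_17 (θ : ℝ × ℝ → ℝ)
    (hθ : ∀ p : ℝ × ℝ, θ p = 2 * Real.arctan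
      ((Real.cosh (Real.sqrt 2 * p.1) - Real.cosh (Real.sqrt 2 * p.2)) /
       (Real.cosh (Real.sqrt 2 * p.1) + Real.cosh (Real.sqrt 2 * p.2)))) :
    ∀ p : ℝ × ℝ, lap θ p = -2 * Real.sin (2 * θ p) := by
  have hθΘ : θ = Θ := by
    funext p
    rw [hθ p, Θ, q, ca, cb, div_eq_mul_inv]
  rw [hθΘ]
  exact lapΘ
end

section
/- Let U ⊆ ℝ² be open, and let C, D : ℝ → ℝ be twice differentiable functions. Then the function θ(x,y) = arcsin(tanh(C(x)+D(y))) satisfies the elliptic sine-Gordon equation Δθ = −2 sin(2θ) at a point (x,y) ∈ U if and only if C''(x) + D''(y) = tanh(C(x)+D(y))·((C'(x))² + (D'(y))² − 4). -/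
open Real

lemma abs_tanh_lt_one (t : ℝ) : |Real.tanh t| < 1 := by
  rw [Real.tanh_eq_sinh_div_cosh, abs_div, abs_of_pos (Real.cosh_pos t),
    div_lt_one (Real.cosh_pos t)]
  have h := Real.cosh_sq_sub_sinh_sq t
  nlinarith [abs_nonneg (Real.sinh t), sq_abs (Real.sinh t), Real.cosh_pos t]

lemma hasDerivAt_tanh' (t : ℝ) : HasDerivAt Real.tanh ((Real.cosh t)^2)⁻¹ t := by
  have h : HasDerivAt (fun s => Real.sinh s / Real.cosh s)
      ((Real.cosh t * Real.cosh t - Real.sinh t * Real.sinh t) / (Real.cosh t)^2) t :=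
    (Real.hasDerivAt_sinh t).div (Real.hasDerivAt_cosh t) (ne_of_gt (Real.cosh_pos t))
  have e : (Real.cosh t * Real.cosh t - Real.sinh t * Real.sinh t) / (Real.cosh t)^2
      = ((Real.cosh t)^2)⁻¹ := by
    have := Real.cosh_sq_sub_sinh_sq t
    field_simp
    nlinarith
  rw [e] at h
  exact h.congr_of_eventuallyEq
    (Filter.Eventually.of_forall fun s => Real.tanh_eq_sinh_div_cosh s)

lemma one_sub_tanh_sq (t : ℝ) : 1 - Real.tanh t ^ 2 = ((Real.cosh t)^2)⁻¹ := by
  have h := Real.cosh_sq_sub_sinh_sq t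
  rw [Real.tanh_eq_sinh_div_cosh]
  have hc := Real.cosh_pos t
  field_simp
  linarith

/-- The Gudermannian-like function arcsin ∘ tanh has derivative 1/cosh. -/
lemma hasDerivAt_gd (t : ℝ) :
    HasDerivAt (fun s => Real.arcsin (Real.tanh s)) (Real.cosh t)⁻¹ t := by
  have hb := _root_.abs_tanh_lt_one t
  rw [abs_lt] at hb
  have ha : HasDerivAt Real.arcsin (1 / Real.sqrt (1 - Real.tanh t ^ 2)) (Real.tanh t) :=
    Real.hasDerivAt_arcsin (by linarith) (by linarith)
  have h := ha.comp t (hasDerivAt_tanh' t)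
  have e : 1 / Real.sqrt (1 - Real.tanh t ^ 2) * ((Real.cosh t)^2)⁻¹ = (Real.cosh t)⁻¹ := by
    have hc := Real.cosh_pos t
    rw [one_sub_tanh_sq t, Real.sqrt_inv, Real.sqrt_sq hc.le]
    field_simp
  rwa [e] at h

section Main

variable (C D : ℝ → ℝ)

/-- fderiv of `p ↦ C p.1 + D p.2`. -/
lemma hasFDerivAt_u (hC : Differentiable ℝ C) (hD : Differentiable ℝ D) (a b : ℝ) :
    HasFDerivAt (fun p : ℝ × ℝ => C p.1 + D p.2)
      (deriv C a • ContinuousLinearMap.fst ℝ ℝ ℝ +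
        deriv D b • ContinuousLinearMap.snd ℝ ℝ ℝ) (a, b) := by
  have h1 : HasFDerivAt (fun p : ℝ × ℝ => C p.1)
      (deriv C a • ContinuousLinearMap.fst ℝ ℝ ℝ) (a, b) :=
    (hC a).hasDerivAt.comp_hasFDerivAt _ (hasFDerivAt_fst)
  have h2 : HasFDerivAt (fun p : ℝ × ℝ => D p.2)
      (deriv D b • ContinuousLinearMap.snd ℝ ℝ ℝ) (a, b) :=
    (hD b).hasDerivAt.comp_hasFDerivAt _ (hasFDerivAt_snd)
  exact h1.add h2

lemma pdx_theta (hC : Differentiable ℝ C) (hD : Differentiable ℝ D)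
    (θ : ℝ × ℝ → ℝ) (hθ : ∀ p : ℝ × ℝ, θ p = Real.arcsin (Real.tanh (C p.1 + D p.2))) :
    pdx θ = fun p => deriv C p.1 * (Real.cosh (C p.1 + D p.2))⁻¹ := by
  funext p
  obtain ⟨a, b⟩ := p
  have hu := hasFDerivAt_u C D hC hD a b
  have hθ1 : HasFDerivAt θ
      ((Real.cosh (C a + D b))⁻¹ • (deriv C a • ContinuousLinearMap.fst ℝ ℝ ℝ +
        deriv D b • ContinuousLinearMap.snd ℝ ℝ ℝ)) (a, b) := by
    have h := (hasDerivAt_gd (C a + D b)).comp_hasFDerivAt (a, b) hu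
    exact h.congr_of_eventuallyEq (Filter.Eventually.of_forall fun p => (hθ p))
  simp only [pdx, hθ1.fderiv]
  simp [mul_comm]

lemma pdy_theta (hC : Differentiable ℝ C) (hD : Differentiable ℝ D)
    (θ : ℝ × ℝ → ℝ) (hθ : ∀ p : ℝ × ℝ, θ p = Real.arcsin (Real.tanh (C p.1 + D p.2))) :
    pdy θ = fun p => deriv D p.2 * (Real.cosh (C p.1 + D p.2))⁻¹ := by
  funext p
  obtain ⟨a, b⟩ := p
  have hu := hasFDerivAt_u C D hC hD a b
  have hθ1 : HasFDerivAt θ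
      ((Real.cosh (C a + D b))⁻¹ • (deriv C a • ContinuousLinearMap.fst ℝ ℝ ℝ +
        deriv D b • ContinuousLinearMap.snd ℝ ℝ ℝ)) (a, b) := by
    have h := (hasDerivAt_gd (C a + D b)).comp_hasFDerivAt (a, b) hu
    exact h.congr_of_eventuallyEq (Filter.Eventually.of_forall fun p => (hθ p))
  simp only [pdy, hθ1.fderiv]
  simp [mul_comm]

end Main

theorem stmt_19 (U : Set (ℝ × ℝ)) (hU : IsOpen U)
    (C D : ℝ → ℝ)
    (hC : Differentiable ℝ C) (hC' : Differentiable ℝ (deriv C))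
    (hD : Differentiable ℝ D) (hD' : Differentiable ℝ (deriv D))
    (θ : ℝ × ℝ → ℝ)
    (hθ : ∀ p : ℝ × ℝ, θ p = Real.arcsin (Real.tanh (C p.1 + D p.2)))
    (x y : ℝ) (hxy : (x, y) ∈ U) :
    lap θ (x, y) = -2 * Real.sin (2 * θ (x, y)) ↔
      deriv (deriv C) x + deriv (deriv D) y =
        Real.tanh (C x + D y) * ((deriv C x) ^ 2 + (deriv D y) ^ 2 - 4) := by
  set u0 := C x + D y with hu0
  set c := Real.cosh u0 with hc0
  set s := Real.sinh u0 with hs0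
  have hcpos : 0 < c := Real.cosh_pos u0
  have hcne : c ≠ 0 := hcpos.ne'
  have hu := hasFDerivAt_u C D hC hD x y
  -- derivative of p ↦ (cosh (C p.1 + D p.2))⁻¹
  have hinv : HasFDerivAt (fun p : ℝ × ℝ => (Real.cosh (C p.1 + D p.2))⁻¹)
      ((-s / c ^ 2) • (deriv C x • ContinuousLinearMap.fst ℝ ℝ ℝ +
        deriv D y • ContinuousLinearMap.snd ℝ ℝ ℝ)) (x, y) := by
    have h1 : HasDerivAt (fun t => (Real.cosh t)⁻¹) (-s / c ^ 2) u0 :=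
      (Real.hasDerivAt_cosh u0).inv hcne
    have := h1.comp_hasFDerivAt (f := fun p : ℝ × ℝ => C p.1 + D p.2) (x, y) hu; exact this
  -- second x-derivative
  have hCC : HasFDerivAt (fun p : ℝ × ℝ => deriv C p.1)
      (deriv (deriv C) x • ContinuousLinearMap.fst ℝ ℝ ℝ) (x, y) :=
    by have := (hC' x).hasDerivAt.comp_hasFDerivAt (f := Prod.fst) (x, y) (hasFDerivAt_fst (𝕜 := ℝ) (p := (x, y))); exact this
  have hDD : HasFDerivAt (fun p : ℝ × ℝ => deriv D p.2)
      (deriv (deriv D) y • ContinuousLinearMap.snd ℝ ℝ ℝ) (x, y) :=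
    by have := (hD' y).hasDerivAt.comp_hasFDerivAt (f := Prod.snd) (x, y) (hasFDerivAt_snd (𝕜 := ℝ) (p := (x, y))); exact this
  have hx2 : pdx (pdx θ) (x, y)
      = deriv C x * ((-s / c ^ 2) * deriv C x) + c⁻¹ * deriv (deriv C) x := by
    rw [pdx_theta C D hC hD θ hθ]
    have hm : HasFDerivAt (fun p : ℝ × ℝ => deriv C p.1 * (Real.cosh (C p.1 + D p.2))⁻¹) _ (x, y) := hCC.mul hinv
    simp only [pdx, hm.fderiv]
    simp
    exact Or.inl rfl
  have hy2 : pdy (pdy θ) (x, y)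
      = deriv D y * ((-s / c ^ 2) * deriv D y) + c⁻¹ * deriv (deriv D) y := by
    rw [pdy_theta C D hC hD θ hθ]
    have hm : HasFDerivAt (fun p : ℝ × ℝ => deriv D p.2 * (Real.cosh (C p.1 + D p.2))⁻¹) _ (x, y) := hDD.mul hinv
    simp only [pdy, hm.fderiv]
    simp
    exact Or.inl rfl
  -- RHS: sin(2θ)
  have hb := _root_.abs_tanh_lt_one u0
  rw [abs_lt] at hb
  have hsin : Real.sin (2 * θ (x, y)) = 2 * (s / c) * c⁻¹ := by
    rw [hθ (x, y)]
    simp only []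
    rw [two_mul, Real.sin_add]
    rw [Real.sin_arcsin (by linarith) (by linarith), Real.cos_arcsin]
    rw [one_sub_tanh_sq, Real.sqrt_inv, Real.sqrt_sq hcpos.le]
    rw [Real.tanh_eq_sinh_div_cosh]
    ring
  have htanh : Real.tanh u0 = s / c := Real.tanh_eq_sinh_div_cosh u0
  have key : lap θ (x, y) - (-2 * Real.sin (2 * θ (x, y)))
      = (deriv (deriv C) x + deriv (deriv D) y
          - Real.tanh u0 * ((deriv C x) ^ 2 + (deriv D y) ^ 2 - 4)) / c := by
    rw [lap, hx2, hy2, hsin, htanh]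
    field_simp
    ring
  constructor
  · intro h
    have h0 : lap θ (x, y) - (-2 * Real.sin (2 * θ (x, y))) = 0 := by rw [h]; ring
    rw [key, div_eq_zero_iff] at h0
    rcases h0 with h0 | h0
    · linarith [h0]
    · exact absurd h0 hcne
  · intro h
    have h0 : (deriv (deriv C) x + deriv (deriv D) y
        - Real.tanh u0 * ((deriv C x) ^ 2 + (deriv D y) ^ 2 - 4)) = 0 := by
      rw [hu0] at h ⊢; linarith
    have := key
    rw [h0, zero_div, sub_eq_zero] at this
    linarith [this]
end
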